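/- Let f(t) = J₀(μ√((ct)² − (x−x′)²)) for |x−x′| < ct, where J₀ is the Bessel function of the first kind of order 0 and J₀′ = −J₁. Then u(t,x) = f(t) satisfies the Klein–Gordon-type equation ∂_t²u − c²∂_x²u + c²μ²u = 0 on the region |x−x′| < ct. -/

import Mathlib

/-- The Bessel function of the first kind of order 0, J₀(z) = ∑ (−1)^m/(m!)² (z/2)^{2m}. -/
noncomputable def besselJ0 (z : ℝ) : ℝ :=
  ∑' m : ℕ, (-1 : ℝ) ^ m / ((Nat.factorial m : ℝ) ^ 2) * (z / 2) ^ (2 * m)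

namespace Bessel18

/-- Dominated coefficient sequences: |b m| ≤ K rᵐ / m!. -/
def Dom (b : ℕ → ℝ) : Prop :=
  ∃ K r : ℝ, 0 ≤ r ∧ ∀ m : ℕ, |b m| ≤ K * r ^ m / (m.factorial : ℝ)

theorem Dom.shift {b : ℕ → ℝ} (hb : Dom b) :
    Dom (fun m => ((m : ℝ) + 1) * b (m + 1)) := by
  obtain ⟨K, r, hr, hK⟩ := hb
  refine ⟨K * r, r, hr, fun m => ?_⟩
  have h := hK (m + 1)
  have hfne : ((m.factorial : ℝ)) ≠ 0 := Nat.cast_ne_zero.mpr m.factorial_ne_zero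
  have hfact : (((m + 1).factorial : ℝ)) = ((m : ℝ) + 1) * (m.factorial : ℝ) := by
    push_cast [Nat.factorial_succ]; ring
  have h1 : |((m : ℝ) + 1) * b (m + 1)| = ((m : ℝ) + 1) * |b (m + 1)| := by
    rw [abs_mul, abs_of_nonneg (by positivity : (0:ℝ) ≤ (m : ℝ) + 1)]
  rw [h1]
  calc ((m : ℝ) + 1) * |b (m + 1)|
      ≤ ((m : ℝ) + 1) * (K * r ^ (m + 1) / (((m + 1).factorial : ℝ))) :=
        mul_le_mul_of_nonneg_left h (by positivity)
    _ = K * r * r ^ m / (m.factorial : ℝ) := by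
        rw [hfact, pow_succ]
        field_simp

theorem Dom.summable {b : ℕ → ℝ} (hb : Dom b) (s : ℝ) :
    Summable (fun m => b m * s ^ m) := by
  obtain ⟨K, r, hr, hK⟩ := hb
  have hsum : Summable (fun m : ℕ => K * (r * |s|) ^ m / (m.factorial : ℝ)) := by
    simpa [mul_div_assoc] using (Real.summable_pow_div_factorial (r * |s|)).mul_left K
  refine Summable.of_norm_bounded hsum fun m => ?_
  calc ‖b m * s ^ m‖ = |b m| * |s| ^ m := by
        rw [norm_mul, norm_pow]; rfl
    _ ≤ (K * r ^ m / (m.factorial : ℝ)) * |s| ^ m :=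
        mul_le_mul_of_nonneg_right (hK m) (by positivity)
    _ = K * (r * |s|) ^ m / (m.factorial : ℝ) := by
        rw [mul_pow]; ring

theorem Dom.hasDerivAt {b : ℕ → ℝ} (hb : Dom b) (s : ℝ) :
    HasDerivAt (fun z => ∑' m : ℕ, b m * z ^ m)
      (∑' m : ℕ, (((m : ℝ) + 1) * b (m + 1)) * s ^ m) s := by
  obtain ⟨K, r, hr, hK⟩ := hb
  have hK0 : 0 ≤ K := le_trans (abs_nonneg _) (by simpa using hK 0)
  set R : ℝ := |s| + 1 with hR
  have hR1 : (1 : ℝ) ≤ R := by rw [hR]; linarith [abs_nonneg s]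
  have hR0 : (0 : ℝ) ≤ R := le_trans zero_le_one hR1
  have hmem : s ∈ Metric.ball (0 : ℝ) R := by
    rw [Metric.mem_ball, Real.dist_eq, sub_zero, hR]; linarith
  have hg' : ∀ (m : ℕ), ∀ y ∈ Metric.ball (0 : ℝ) R,
      ‖b m * ((m : ℝ) * y ^ (m - 1))‖ ≤ K * (2 * (r * R)) ^ m / (m.factorial : ℝ) := by
    intro m y hy
    have hyR : |y| ≤ R := by
      have := Metric.mem_ball.mp hy
      rw [Real.dist_eq, sub_zero] at this
      exact this.le
    have hy0 : (0:ℝ) ≤ |y| := abs_nonneg y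
    have h2m : ((m : ℝ)) ≤ 2 ^ m := by exact_mod_cast (Nat.lt_two_pow_self (n := m)).le
    have hRpow : R ^ (m - 1) ≤ R ^ m := pow_le_pow_right₀ hR1 (Nat.sub_le m 1)
    have hypow : |y| ^ (m - 1) ≤ R ^ (m - 1) := pow_le_pow_left₀ hy0 hyR _
    have hstep : (m : ℝ) * |y| ^ (m - 1) ≤ 2 ^ m * R ^ m :=
      mul_le_mul h2m (le_trans hypow hRpow) (by positivity) (by positivity)
    calc ‖b m * ((m : ℝ) * y ^ (m - 1))‖ = |b m| * ((m : ℝ) * |y| ^ (m - 1)) := by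
          rw [Real.norm_eq_abs, abs_mul, abs_mul, abs_pow, Nat.abs_cast]
      _ ≤ (K * r ^ m / (m.factorial : ℝ)) * (2 ^ m * R ^ m) :=
          mul_le_mul (hK m) hstep (by positivity) (by positivity)
      _ = K * (2 * (r * R)) ^ m / (m.factorial : ℝ) := by
          rw [mul_pow, mul_pow]; ring
  have hsum_u : Summable (fun m : ℕ => K * (2 * (r * R)) ^ m / (m.factorial : ℝ)) := by
    simpa [mul_div_assoc] using (Real.summable_pow_div_factorial (2 * (r * R))).mul_left K
  have h0 : Summable fun m => b m * s ^ m := Dom.summable ⟨K, r, hr, hK⟩ s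
  have H := hasDerivAt_tsum_of_isPreconnected (g := fun m z => b m * z ^ m)
      (g' := fun m y => b m * ((m : ℝ) * y ^ (m - 1)))
      hsum_u Metric.isOpen_ball (convex_ball (0:ℝ) R).isPreconnected
      (fun m y _ => (hasDerivAt_pow m y).const_mul (b m)) hg' hmem h0 hmem
  have hsum' : Summable fun m : ℕ => b m * ((m : ℝ) * s ^ (m - 1)) :=
    Summable.of_norm_bounded hsum_u fun m => hg' m s hmem
  have key : (∑' m : ℕ, b m * ((m : ℝ) * s ^ (m - 1)))
      = ∑' m : ℕ, (((m : ℝ) + 1) * b (m + 1)) * s ^ m := by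
    rw [Summable.tsum_eq_zero_add hsum']
    have h00 : b 0 * (((0:ℕ) : ℝ) * s ^ (0 - 1)) = 0 := by simp
    rw [h00, zero_add]
    refine tsum_congr fun m => ?_
    have hmi : (m + 1 - 1) = m := rfl
    rw [hmi]
    push_cast
    ring
  rw [key] at H
  exact H

/-- Coefficients of the series G(s) = J₀(μ√s). -/
noncomputable def a (μ : ℝ) (m : ℕ) : ℝ :=
  (-1) ^ m * (μ ^ 2 / 4) ^ m / ((m.factorial : ℝ)) ^ 2

noncomputable def a1 (μ : ℝ) (m : ℕ) : ℝ := ((m : ℝ) + 1) * a μ (m + 1)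

noncomputable def a2 (μ : ℝ) (m : ℕ) : ℝ := ((m : ℝ) + 1) * a1 μ (m + 1)

noncomputable def G (μ s : ℝ) : ℝ := ∑' m, a μ m * s ^ m

noncomputable def G1 (μ s : ℝ) : ℝ := ∑' m, a1 μ m * s ^ m

noncomputable def G2 (μ s : ℝ) : ℝ := ∑' m, a2 μ m * s ^ m

theorem dom_a (μ : ℝ) : Dom (a μ) := by
  refine ⟨1, μ ^ 2 / 4, by positivity, fun m => ?_⟩
  have hfpos : (0 : ℝ) < (m.factorial : ℝ) := by exact_mod_cast m.factorial_pos
  have hf1 : (1 : ℝ) ≤ (m.factorial : ℝ) := by exact_mod_cast m.factorial_pos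
  have habs : |a μ m| = (μ ^ 2 / 4) ^ m / ((m.factorial : ℝ)) ^ 2 := by
    rw [a, abs_div, abs_mul, abs_pow, abs_pow, abs_pow, abs_neg, abs_one, one_pow,
      one_mul, abs_of_nonneg (by positivity : (0:ℝ) ≤ μ ^ 2 / 4),
      abs_of_nonneg hfpos.le]
  rw [habs, one_mul]
  have hle : (m.factorial : ℝ) ≤ ((m.factorial : ℝ)) ^ 2 := by nlinarith
  exact div_le_div_of_nonneg_left (by positivity) hfpos hle

theorem dom_a1 (μ : ℝ) : Dom (a1 μ) := (dom_a μ).shift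

theorem dom_a2 (μ : ℝ) : Dom (a2 μ) := (dom_a1 μ).shift

theorem hasDerivAt_G (μ s : ℝ) : HasDerivAt (G μ) (G1 μ s) s :=
  (dom_a μ).hasDerivAt s

theorem hasDerivAt_G1 (μ s : ℝ) : HasDerivAt (G1 μ) (G2 μ s) s :=
  (dom_a1 μ).hasDerivAt s

theorem iteratedDeriv_two (f : ℝ → ℝ) : iteratedDeriv 2 f = deriv (deriv f) := by
  rw [show (2 : ℕ) = 1 + 1 from rfl, iteratedDeriv_succ, iteratedDeriv_one]

theorem a_rec (μ : ℝ) (k : ℕ) :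
    ((k : ℝ) + 1) ^ 2 * a μ (k + 1) = -(μ ^ 2 / 4) * a μ k := by
  have hfne : ((k.factorial : ℝ)) ≠ 0 := Nat.cast_ne_zero.mpr k.factorial_ne_zero
  have hkne : ((k : ℝ) + 1) ≠ 0 := by positivity
  have h1 : (((k + 1).factorial : ℝ)) = ((k : ℝ) + 1) * (k.factorial : ℝ) := by
    push_cast [Nat.factorial_succ]; ring
  rw [a, a, h1, pow_succ (-1 : ℝ), pow_succ (μ ^ 2 / 4)]
  field_simp

set_option maxHeartbeats 1000000 in
theorem ode (μ s : ℝ) : s * G2 μ s + G1 μ s + μ ^ 2 / 4 * G μ s = 0 := by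
  have hS0 : Summable fun m => a μ m * s ^ m := (dom_a μ).summable s
  have hS1 : Summable fun m => a1 μ m * s ^ m := (dom_a1 μ).summable s
  have hS2 : Summable fun m => a2 μ m * s ^ m := (dom_a2 μ).summable s
  have hS2' : Summable fun m => a2 μ m * s ^ (m + 1) :=
    (hS2.mul_left s).congr fun m => by ring
  have hS1' : Summable fun m : ℕ => a1 μ (m + 1) * s ^ (m + 1) :=
    (summable_nat_add_iff 1).mpr hS1
  have hS0' : Summable fun m : ℕ => μ ^ 2 / 4 * (a μ (m + 1) * s ^ (m + 1)) :=
    (((summable_nat_add_iff 1).mpr hS0)).mul_left _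
  have h1 : s * G2 μ s = ∑' m, a2 μ m * s ^ (m + 1) := by
    rw [G2, ← tsum_mul_left]
    exact tsum_congr fun m => by ring
  have h2 : G1 μ s = a1 μ 0 + ∑' m, a1 μ (m + 1) * s ^ (m + 1) := by
    rw [G1, Summable.tsum_eq_zero_add hS1, pow_zero, mul_one]
  have h3 : μ ^ 2 / 4 * G μ s
      = μ ^ 2 / 4 * a μ 0 + ∑' m, μ ^ 2 / 4 * (a μ (m + 1) * s ^ (m + 1)) := by
    rw [G, Summable.tsum_eq_zero_add hS0, mul_add, pow_zero, mul_one, ← tsum_mul_left]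
  have hterm : ∀ m : ℕ,
      a2 μ m * s ^ (m + 1) + a1 μ (m + 1) * s ^ (m + 1)
        + μ ^ 2 / 4 * (a μ (m + 1) * s ^ (m + 1)) = 0 := by
    intro m
    have h := a_rec μ (m + 1)
    simp only [a2, a1]
    push_cast at h ⊢
    linear_combination (s ^ (m + 1)) * h
  have hsum_eq : (∑' m, a2 μ m * s ^ (m + 1)) + (∑' m, a1 μ (m + 1) * s ^ (m + 1))
      + (∑' m, μ ^ 2 / 4 * (a μ (m + 1) * s ^ (m + 1))) = 0 := by
    rw [← Summable.tsum_add hS2' hS1', ← Summable.tsum_add (hS2'.add hS1') hS0']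
    rw [tsum_congr fun m => hterm m]
    exact tsum_zero
  have hconst : a1 μ 0 + μ ^ 2 / 4 * a μ 0 = 0 := by
    have h := a_rec μ 0
    simp only [a1]
    norm_num at h ⊢
    linarith
  rw [h1, h2, h3]
  linarith [hsum_eq, hconst]

theorem besselJ0_eq (μ s : ℝ) (hs : 0 ≤ s) : besselJ0 (μ * Real.sqrt s) = G μ s := by
  rw [besselJ0, G]
  refine tsum_congr fun m => ?_
  rw [pow_mul]
  have h : (μ * Real.sqrt s / 2) ^ 2 = μ ^ 2 / 4 * s := by
    rw [div_pow, mul_pow, Real.sq_sqrt hs]; ring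
  rw [h, a, mul_pow]
  ring

end Bessel18

open Bessel18 in
/-- The kernel u(t,x) = J₀(μ√((ct)² − (x−x′)²)) satisfies the Klein–Gordon-type
equation ∂ₜ²u − c²∂ₓ²u + c²μ²u = 0 on the region |x − x′| < ct. -/
theorem stmt_18 (c μ x' : ℝ) (hc : 0 < c)
    (u : ℝ → ℝ → ℝ)
    (hu : u = fun t x => besselJ0 (μ * Real.sqrt ((c * t) ^ 2 - (x - x') ^ 2))) :
    ∀ t x : ℝ, |x - x'| < c * t →
      iteratedDeriv 2 (fun τ => u τ x) t - c ^ 2 * iteratedDeriv 2 (fun y => u t y) x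
        + c ^ 2 * μ ^ 2 * u t x = 0 := by
  subst hu
  intro t x h
  beta_reduce
  have hs₀pos : 0 < (c * t) ^ 2 - (x - x') ^ 2 := by
    nlinarith [sq_abs (x - x'), abs_nonneg (x - x'), h]
  -- equality of u with G where the argument is nonnegative
  have hueq : ∀ τ y : ℝ, 0 ≤ (c * τ) ^ 2 - (y - x') ^ 2 →
      besselJ0 (μ * Real.sqrt ((c * τ) ^ 2 - (y - x') ^ 2))
        = G μ ((c * τ) ^ 2 - (y - x') ^ 2) := fun τ y hh => besselJ0_eq μ _ hh
  -- derivative of the inner functions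
  have hst : ∀ τ : ℝ, HasDerivAt (fun τ => (c * τ) ^ 2 - (x - x') ^ 2) (2 * c ^ 2 * τ) τ := by
    intro τ
    have h1 : HasDerivAt (fun τ : ℝ => (c * τ) ^ 2) (2 * c ^ 2 * τ) τ := by
      have := ((hasDerivAt_id τ).const_mul c).pow 2
      refine this.congr_deriv ?_
      simp only [id_eq]
      push_cast
      ring
    exact h1.sub_const _
  have hsx : ∀ y : ℝ, HasDerivAt (fun y => (c * t) ^ 2 - (y - x') ^ 2) (-(2 * (y - x'))) y := by
    intro y
    have h1 : HasDerivAt (fun y : ℝ => (y - x') ^ 2) (2 * (y - x')) y := by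
      have := ((hasDerivAt_id y).sub_const x').pow 2
      refine this.congr_deriv ?_
      simp only [id_eq]
      push_cast
      ring
    exact h1.const_sub _
  -- t-direction
  have hUopen : IsOpen {τ : ℝ | 0 < (c * τ) ^ 2 - (x - x') ^ 2} := by
    apply isOpen_lt continuous_const
    fun_prop
  have htU : t ∈ {τ : ℝ | 0 < (c * τ) ^ 2 - (x - x') ^ 2} := hs₀pos
  have hderf : ∀ τ ∈ {τ : ℝ | 0 < (c * τ) ^ 2 - (x - x') ^ 2},
      HasDerivAt (fun τ => besselJ0 (μ * Real.sqrt ((c * τ) ^ 2 - (x - x') ^ 2)))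
        (G1 μ ((c * τ) ^ 2 - (x - x') ^ 2) * (2 * c ^ 2 * τ)) τ := by
    intro τ hτ
    have hcomp : HasDerivAt (fun τ => G μ ((c * τ) ^ 2 - (x - x') ^ 2))
        (G1 μ ((c * τ) ^ 2 - (x - x') ^ 2) * (2 * c ^ 2 * τ)) τ :=
      (hasDerivAt_G μ _).comp τ (hst τ)
    apply hcomp.congr_of_eventuallyEq
    filter_upwards [hUopen.mem_nhds hτ] with τ' hτ'
    exact hueq τ' x (le_of_lt hτ')
  have hevt : deriv (fun τ => besselJ0 (μ * Real.sqrt ((c * τ) ^ 2 - (x - x') ^ 2)))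
      =ᶠ[nhds t] fun τ => G1 μ ((c * τ) ^ 2 - (x - x') ^ 2) * (2 * c ^ 2 * τ) := by
    filter_upwards [hUopen.mem_nhds htU] with τ hτ
    exact (hderf τ hτ).deriv
  have hd1 : HasDerivAt (fun τ => G1 μ ((c * τ) ^ 2 - (x - x') ^ 2) * (2 * c ^ 2 * τ))
      (G2 μ ((c * t) ^ 2 - (x - x') ^ 2) * (2 * c ^ 2 * t) * (2 * c ^ 2 * t)
        + G1 μ ((c * t) ^ 2 - (x - x') ^ 2) * (2 * c ^ 2)) t := by
    have hA : HasDerivAt (fun τ => G1 μ ((c * τ) ^ 2 - (x - x') ^ 2))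
        (G2 μ ((c * t) ^ 2 - (x - x') ^ 2) * (2 * c ^ 2 * t)) t :=
      (hasDerivAt_G1 μ _).comp t (hst t)
    have hB : HasDerivAt (fun τ : ℝ => 2 * c ^ 2 * τ) (2 * c ^ 2) t := by
      simpa using (hasDerivAt_id t).const_mul (2 * c ^ 2)
    exact hA.mul hB
  have ht2 : iteratedDeriv 2 (fun τ => besselJ0 (μ * Real.sqrt ((c * τ) ^ 2 - (x - x') ^ 2))) t
      = G2 μ ((c * t) ^ 2 - (x - x') ^ 2) * (2 * c ^ 2 * t) * (2 * c ^ 2 * t)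
        + G1 μ ((c * t) ^ 2 - (x - x') ^ 2) * (2 * c ^ 2) := by
    rw [iteratedDeriv_two]
    rw [hevt.deriv_eq]
    exact hd1.deriv
  -- x-direction
  have hVopen : IsOpen {y : ℝ | 0 < (c * t) ^ 2 - (y - x') ^ 2} := by
    apply isOpen_lt continuous_const
    fun_prop
  have hxV : x ∈ {y : ℝ | 0 < (c * t) ^ 2 - (y - x') ^ 2} := hs₀pos
  have hderg : ∀ y ∈ {y : ℝ | 0 < (c * t) ^ 2 - (y - x') ^ 2},
      HasDerivAt (fun y => besselJ0 (μ * Real.sqrt ((c * t) ^ 2 - (y - x') ^ 2)))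
        (G1 μ ((c * t) ^ 2 - (y - x') ^ 2) * (-(2 * (y - x')))) y := by
    intro y hy
    have hcomp : HasDerivAt (fun y => G μ ((c * t) ^ 2 - (y - x') ^ 2))
        (G1 μ ((c * t) ^ 2 - (y - x') ^ 2) * (-(2 * (y - x')))) y :=
      (hasDerivAt_G μ _).comp y (hsx y)
    apply hcomp.congr_of_eventuallyEq
    filter_upwards [hVopen.mem_nhds hy] with y' hy'
    exact hueq t y' (le_of_lt hy')
  have hevx : deriv (fun y => besselJ0 (μ * Real.sqrt ((c * t) ^ 2 - (y - x') ^ 2)))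
      =ᶠ[nhds x] fun y => G1 μ ((c * t) ^ 2 - (y - x') ^ 2) * (-(2 * (y - x'))) := by
    filter_upwards [hVopen.mem_nhds hxV] with y hy
    exact (hderg y hy).deriv
  have hd2 : HasDerivAt (fun y => G1 μ ((c * t) ^ 2 - (y - x') ^ 2) * (-(2 * (y - x'))))
      (G2 μ ((c * t) ^ 2 - (x - x') ^ 2) * (-(2 * (x - x'))) * (-(2 * (x - x')))
        + G1 μ ((c * t) ^ 2 - (x - x') ^ 2) * (-2)) x := by
    have hA : HasDerivAt (fun y => G1 μ ((c * t) ^ 2 - (y - x') ^ 2))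
        (G2 μ ((c * t) ^ 2 - (x - x') ^ 2) * (-(2 * (x - x')))) x :=
      (hasDerivAt_G1 μ _).comp x (hsx x)
    have hB : HasDerivAt (fun y : ℝ => -(2 * (y - x'))) (-2 : ℝ) x := by
      have := (((hasDerivAt_id x).sub_const x').const_mul 2).neg
      exact this.congr_deriv (by norm_num)
    exact hA.mul hB
  have hx2 : iteratedDeriv 2 (fun y => besselJ0 (μ * Real.sqrt ((c * t) ^ 2 - (y - x') ^ 2))) x
      = G2 μ ((c * t) ^ 2 - (x - x') ^ 2) * (-(2 * (x - x'))) * (-(2 * (x - x')))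
        + G1 μ ((c * t) ^ 2 - (x - x') ^ 2) * (-2) := by
    rw [iteratedDeriv_two]
    rw [hevx.deriv_eq]
    exact hd2.deriv
  -- assemble
  have hu0 : besselJ0 (μ * Real.sqrt ((c * t) ^ 2 - (x - x') ^ 2))
      = G μ ((c * t) ^ 2 - (x - x') ^ 2) := hueq t x hs₀pos.le
  have hode := ode μ ((c * t) ^ 2 - (x - x') ^ 2)
  beta_reduce
  rw [ht2, hx2, hu0]
  linear_combination (4 * c ^ 2) * hode
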